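/- Let A be a separable unital C*-algebra with state space L₁ (a compact metrizable convex set in the weak* topology). Let (f_k) be a dense sequence in the self-adjoint part of a subspace, and for each k let ĝ_k : L₁ → ℝ be continuous affine and ǧ_k : L₁ → ℝ convex and lower semicontinuous with ǧ_k ≤ ĝ_k. Then the set Y = {μ ∈ L₁ : ĝ_k(μ) = ǧ_k(μ) for all k} is a Gδ subset of L₁, and if ρ is a regular Borel probability measure on L₁ with barycenter μ ∈ Y, then ρ(X) = 0 for each of the closed sets X_{km} = {ν : ĝ_k(ν) − ǧ_k(ν) ≥ 1/m}. -/

import Mathlib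

open MeasureTheory

noncomputable section

/-- Every convex lower semicontinuous function on a compact convex subset of a
locally convex space admits, near any point, a continuous affine minorant whose
value at that point is within `ε` of the function value. -/
lemma exists_affine_minorant_aux
    {V : Type*} [AddCommGroup V] [Module ℝ V] [TopologicalSpace V]
    [IsTopologicalAddGroup V] [ContinuousSMul ℝ V] [T2Space V]
    [LocallyConvexSpace ℝ V]
    (L : Set V) (hLcomp : IsCompact L) (hLconv : Convex ℝ L)
    (g : ↥L → ℝ) (hlsc : LowerSemicontinuous g)
    (hconv : ∀ (x y : ↥L) (t : ℝ) (ht : 0 ≤ t) (ht' : t ≤ 1),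
      g ⟨t • (x : V) + (1 - t) • (y : V),
        hLconv x.2 y.2 ht (by linarith) (by ring)⟩ ≤
      t * g x + (1 - t) * g y)
    (μ : ↥L) (ε : ℝ) (hε : 0 < ε) :
    ∃ a : ↥L → ℝ, Continuous a ∧
      (∀ (x y : ↥L) (t : ℝ) (ht : 0 ≤ t) (ht' : t ≤ 1),
        a ⟨t • (x : V) + (1 - t) • (y : V),
          hLconv x.2 y.2 ht (by linarith) (by ring)⟩ =
        t * a x + (1 - t) * a y) ∧
      (∀ x, a x ≤ g x) ∧ g μ - ε < a μ := by
  have hLclosed : IsClosed L := hLcomp.isClosed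
  set E : Set (V × ℝ) :=
    (Prod.map (Subtype.val : ↥L → V) (id : ℝ → ℝ)) '' {q : ↥L × ℝ | g q.1 ≤ q.2} with hE
  have hmemE : ∀ (x : ↥L) (t : ℝ), g x ≤ t → ((x : V), t) ∈ E := by
    intro x t hxt
    exact ⟨(x, t), hxt, rfl⟩
  have hepi : IsClosed {q : ↥L × ℝ | g q.1 ≤ q.2} := by
    rw [← isOpen_compl_iff]
    have hcompl : {q : ↥L × ℝ | g q.1 ≤ q.2}ᶜ
        = ⋃ c : ℚ, ({p : ↥L × ℝ | (c : ℝ) < g p.1} ∩ {p : ↥L × ℝ | p.2 < (c : ℝ)}) := by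
      ext q
      simp only [Set.mem_compl_iff, Set.mem_setOf_eq, Set.mem_iUnion, Set.mem_inter_iff, not_le]
      constructor
      · intro h
        obtain ⟨c, hc1, hc2⟩ := exists_rat_btwn h
        exact ⟨c, hc2, hc1⟩
      · rintro ⟨c, h1, h2⟩
        linarith
    rw [hcompl]
    refine isOpen_iUnion fun c => IsOpen.inter ?_ (isOpen_lt continuous_snd continuous_const)
    have := (lowerSemicontinuous_iff_isOpen_preimage.mp hlsc) (c : ℝ)
    exact this.preimage continuous_fst
  have hEclosed : IsClosed E := by
    have h1 : IsProperMap (Prod.map (Subtype.val : ↥L → V) (id : ℝ → ℝ)) :=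
      (hLclosed.isClosedEmbedding_subtypeVal.isProperMap).prodMap isProperMap_id
    exact h1.isClosedMap _ hepi
  have hEconv : Convex ℝ E := by
    rintro p ⟨⟨x, s⟩, hx, rfl⟩ q ⟨⟨y, t⟩, hy, rfl⟩ a b ha hb hab
    have hb' : b = 1 - a := by linarith
    subst hb'
    refine ⟨(⟨a • (x : V) + (1 - a) • (y : V),
      hLconv x.2 y.2 ha (by linarith) (by ring)⟩, a * s + (1 - a) * t), ?_, ?_⟩
    · show g _ ≤ a * s + (1 - a) * t
      have h2 := hconv x y a ha (by linarith)
      have h3 : a * g x ≤ a * s := mul_le_mul_of_nonneg_left hx ha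
      have h4 : (1 - a) * g y ≤ (1 - a) * t := mul_le_mul_of_nonneg_left hy (by linarith)
      exact le_trans h2 (by linarith)
    · simp [Prod.ext_iff, Prod.smul_mk, smul_eq_mul]
  have hp₀ : ((μ : V), g μ - ε) ∉ E := by
    rintro ⟨⟨x, s⟩, hx, heq⟩
    simp only [Prod.map, Prod.ext_iff] at heq
    obtain ⟨h1, h2⟩ := heq
    have hxμ : x = μ := Subtype.ext h1
    subst hxμ
    simp only [id] at h2
    rw [h2] at hx
    simp only [Set.mem_setOf_eq] at hx
    linarith
  obtain ⟨f, u, hfu, hEsep⟩ := geometric_hahn_banach_point_closed hEconv hEclosed hp₀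
  set φ : V → ℝ := fun v => f (v, 0) with hφ
  set r : ℝ := f (0, 1) with hr
  have hf_eq : ∀ (v : V) (t : ℝ), f (v, t) = φ v + t * r := by
    intro v t
    have : (v, t) = (v, (0 : ℝ)) + t • ((0 : V), (1 : ℝ)) := by
      simp [Prod.ext_iff]
    rw [this, f.map_add, f.map_smul, smul_eq_mul, hφ, hr]
  have key : ∀ (x : ↥L) (t : ℝ), g x ≤ t → u < φ (x : V) + t * r := by
    intro x t hxt
    have := hEsep _ (hmemE x t hxt)
    rwa [hf_eq] at this
  have hfu' : φ (μ : V) + (g μ - ε) * r < u := by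
    have := hfu
    rwa [hf_eq] at this
  have hrpos : 0 < r := by
    have h1 := key μ (g μ) le_rfl
    nlinarith
  refine ⟨fun x => (u - φ (x : V)) / r, ?_, ?_, ?_, ?_⟩
  · have hφcont : Continuous fun x : ↥L => φ (x : V) :=
      f.continuous.comp ((continuous_subtype_val).prodMk continuous_const)
    exact (continuous_const.sub hφcont).div_const r
  · intro x y t ht ht'
    have hφlin : φ (t • (x : V) + (1 - t) • (y : V)) = t * φ (x : V) + (1 - t) * φ (y : V) := by
      have : ((t • (x : V) + (1 - t) • (y : V), (0 : ℝ)) : V × ℝ)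
          = t • ((x : V), (0 : ℝ)) + (1 - t) • ((y : V), (0 : ℝ)) := by
        simp [Prod.ext_iff]
      simp only [hφ]
      rw [this, f.map_add, f.map_smul, f.map_smul, smul_eq_mul, smul_eq_mul]
    simp only [hφlin]
    field_simp
    ring
  · intro x
    have h1 := key x (g x) le_rfl
    rw [div_le_iff₀ hrpos]
    nlinarith
  · rw [lt_div_iff₀ hrpos]
    nlinarith

/-- Let `L₁` be the (compact convex) state space of a
separable unital C*-algebra, here abstracted as a compact convex subset `L` of a
locally convex space.  For each `k` let `ĝ_k : L → ℝ` be continuous and affine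
and `ǧ_k : L → ℝ` be convex and lower semicontinuous with `ǧ_k ≤ ĝ_k`.  Then the
set `Y = {μ ∈ L : ĝ_k(μ) = ǧ_k(μ) for all k}` is a Gδ subset of `L`, and if `ρ`
is a regular Borel probability measure on `L` with barycenter `μ ∈ Y`, then
`ρ(X_{km}) = 0` for each of the closed sets
`X_{km} = {ν : ĝ_k(ν) − ǧ_k(ν) ≥ 1/m}`. -/
theorem gdelta_and_null_sets_for_convex_envelope_discrepancy
    {V : Type*} [AddCommGroup V] [Module ℝ V] [TopologicalSpace V]
    [IsTopologicalAddGroup V] [ContinuousSMul ℝ V] [T2Space V]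
    [LocallyConvexSpace ℝ V] [MeasurableSpace V] [BorelSpace V]
    (L : Set V) (hLcomp : IsCompact L) (hLconv : Convex ℝ L)
    (hatg checkg : ℕ → (↥L → ℝ))
    -- each `ĝ_k` is continuous and affine
    (hhatcont : ∀ k, Continuous (hatg k))
    (hhataff : ∀ k (x y : ↥L) (t : ℝ) (ht : 0 ≤ t) (ht' : t ≤ 1),
      hatg k ⟨t • (x : V) + (1 - t) • (y : V),
        hLconv x.2 y.2 ht (by linarith) (by ring)⟩ =
      t * hatg k x + (1 - t) * hatg k y)
    -- each `ǧ_k` is lower semicontinuous and convex, with `ǧ_k ≤ ĝ_k`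
    (hchecklsc : ∀ k, LowerSemicontinuous (checkg k))
    (hcheckconv : ∀ k (x y : ↥L) (t : ℝ) (ht : 0 ≤ t) (ht' : t ≤ 1),
      checkg k ⟨t • (x : V) + (1 - t) • (y : V),
        hLconv x.2 y.2 ht (by linarith) (by ring)⟩ ≤
      t * checkg k x + (1 - t) * checkg k y)
    (hle : ∀ k x, checkg k x ≤ hatg k x)
    -- a regular Borel probability measure `ρ` on `L` with barycenter `μ`
    (ρ : Measure ↥L) [IsProbabilityMeasure ρ] (hreg : ρ.Regular)
    (μ : ↥L)
    (hbar : ∀ a : ↥L → ℝ, Continuous a →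
      (∀ (x y : ↥L) (t : ℝ) (ht : 0 ≤ t) (ht' : t ≤ 1),
        a ⟨t • (x : V) + (1 - t) • (y : V),
          hLconv x.2 y.2 ht (by linarith) (by ring)⟩ =
        t * a x + (1 - t) * a y) →
      ∫ x, a x ∂ρ = a μ)
    -- `μ` lies in `Y`
    (hμ : ∀ k, hatg k μ = checkg k μ) :
    IsGδ {ν : ↥L | ∀ k, hatg k ν = checkg k ν} ∧
    ∀ (k m : ℕ), 1 ≤ m →
      ρ {ν : ↥L | (1 : ℝ) / m ≤ hatg k ν - checkg k ν} = 0 := by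
  haveI : CompactSpace ↥L := isCompact_iff_compactSpace.mp hLcomp
  constructor
  · -- Gδ part
    have hset : {ν : ↥L | ∀ k, hatg k ν = checkg k ν}
        = ⋂ k : ℕ, ⋂ n : ℕ, {ν : ↥L | -(1 / ((n : ℝ) + 1)) < checkg k ν - hatg k ν} := by
      ext ν
      simp only [Set.mem_setOf_eq, Set.mem_iInter]
      constructor
      · intro h k n
        rw [h k]
        have : (0 : ℝ) < 1 / ((n : ℝ) + 1) := by positivity
        show -(1 / ((n : ℝ) + 1)) < checkg k ν - checkg k ν
        linarith
      · intro h k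
        refine le_antisymm ?_ (hle k ν)
        by_contra hcon
        push_neg at hcon
        have hd : 0 < hatg k ν - checkg k ν := by linarith
        obtain ⟨n, hn⟩ := exists_nat_one_div_lt hd
        have := h k n
        change -(1 / ((n : ℝ) + 1)) < checkg k ν - hatg k ν at this
        linarith
    rw [hset]
    refine IsGδ.iInter fun k => IsGδ.iInter fun n => IsOpen.isGδ ?_
    have hlsc : LowerSemicontinuous (fun ν => checkg k ν - hatg k ν) := by
      have h1 : LowerSemicontinuous (fun ν => -(hatg k ν)) :=
        ((hhatcont k).neg).lowerSemicontinuous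
      simpa [sub_eq_add_neg] using (hchecklsc k).add h1
    have := (lowerSemicontinuous_iff_isOpen_preimage.mp hlsc) (-(1 / ((n : ℝ) + 1)))
    exact this
  · -- null part
    intro k m hm
    have hmpos : (0 : ℝ) < (m : ℝ) := by exact_mod_cast Nat.lt_of_lt_of_le Nat.zero_lt_one hm
    -- integrability helper
    have int_of_bound : ∀ (f : ↥L → ℝ), Measurable f → (∃ C, ∀ x, |f x| ≤ C) → Integrable f ρ := by
      rintro f hmeas ⟨C, hC⟩
      refine ⟨hmeas.aestronglyMeasurable, ?_⟩
      refine MeasureTheory.HasFiniteIntegral.of_bounded (C := C) (Filter.Eventually.of_forall ?_)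
      intro x
      simpa [Real.norm_eq_abs] using hC x
    -- bound for hatg k
    obtain ⟨C₁, hC₁⟩ := isCompact_univ.exists_bound_of_continuousOn (hhatcont k).continuousOn
    have hC₁' : ∀ x : ↥L, |hatg k x| ≤ C₁ := fun x => by
      simpa [Real.norm_eq_abs] using hC₁ x trivial
    have int_hat : Integrable (hatg k) ρ :=
      int_of_bound _ (hhatcont k).measurable ⟨C₁, hC₁'⟩
    -- lower bound for checkg k via an affine minorant
    obtain ⟨a₁, ha₁cont, _, ha₁le, _⟩ :=
      exists_affine_minorant_aux L hLcomp hLconv (checkg k) (hchecklsc k) (hcheckconv k) μ 1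
        one_pos
    obtain ⟨C₂, hC₂⟩ := isCompact_univ.exists_bound_of_continuousOn ha₁cont.continuousOn
    have hC₂' : ∀ x : ↥L, |a₁ x| ≤ C₂ := fun x => by
      simpa [Real.norm_eq_abs] using hC₂ x trivial
    have hcheck_bound : ∀ x : ↥L, |checkg k x| ≤ max C₁ C₂ := by
      intro x
      rw [abs_le]
      constructor
      · have h1 := (abs_le.mp (hC₂' x)).1
        have h2 := ha₁le x
        have := le_max_right C₁ C₂
        linarith
      · have h1 := (abs_le.mp (hC₁' x)).2
        have h2 := hle k x
        have := le_max_left C₁ C₂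
        linarith
    have int_check : Integrable (checkg k) ρ :=
      int_of_bound _ (hchecklsc k).measurable ⟨max C₁ C₂, hcheck_bound⟩
    -- Jensen's inequality for the barycenter
    have jensen : checkg k μ ≤ ∫ x, checkg k x ∂ρ := by
      by_contra hcon
      push_neg at hcon
      set ε := checkg k μ - ∫ x, checkg k x ∂ρ with hεdef
      have hεpos : 0 < ε := by simp only [hεdef]; linarith
      obtain ⟨a, hacont, haaff, hale, haμ⟩ :=
        exists_affine_minorant_aux L hLcomp hLconv (checkg k) (hchecklsc k) (hcheckconv k) μ ε
          hεpos
      obtain ⟨C₃, hC₃⟩ := isCompact_univ.exists_bound_of_continuousOn hacont.continuousOn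
      have int_a : Integrable a ρ := int_of_bound _ hacont.measurable
        ⟨C₃, fun x => by simpa [Real.norm_eq_abs] using hC₃ x trivial⟩
      have h1 : ∫ x, a x ∂ρ ≤ ∫ x, checkg k x ∂ρ := integral_mono int_a int_check hale
      have h2 : ∫ x, a x ∂ρ = a μ := hbar a hacont haaff
      have h3 : checkg k μ - ε < a μ := haμ
      simp only [hεdef] at h3
      linarith
    -- the integral of the nonnegative discrepancy vanishes
    have hnonneg : ∀ x, 0 ≤ hatg k x - checkg k x := fun x => sub_nonneg.2 (hle k x)
    have int_diff : Integrable (fun x => hatg k x - checkg k x) ρ := int_hat.sub int_check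
    have hint : ∫ x, (hatg k x - checkg k x) ∂ρ = 0 := by
      have heq : ∫ x, (hatg k x - checkg k x) ∂ρ
          = (∫ x, hatg k x ∂ρ) - ∫ x, checkg k x ∂ρ := integral_sub int_hat int_check
      have hhat : ∫ x, hatg k x ∂ρ = hatg k μ := hbar (hatg k) (hhatcont k) (hhataff k)
      refine le_antisymm ?_ (integral_nonneg hnonneg)
      rw [heq, hhat, hμ k]
      linarith
    have hae : (fun x => hatg k x - checkg k x) =ᵐ[ρ] 0 :=
      (integral_eq_zero_iff_of_nonneg hnonneg int_diff).mp hint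
    have h0 : ρ {x : ↥L | ¬ (hatg k x - checkg k x = 0)} = 0 := by
      simpa [Filter.EventuallyEq, ae_iff] using hae
    refine measure_mono_null ?_ h0
    intro ν hν
    simp only [Set.mem_setOf_eq] at hν ⊢
    intro hzero
    have : (0 : ℝ) < 1 / (m : ℝ) := by positivity
    linarith


end
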